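/- Let n ≥ 7 be an integer with n ≡ 4 (mod 6) and set k = ⌈n/3⌉. If a connected simple graph G of order n contains a subgraph isomorphic to C(m, q) for some integers m, q ≥ 3, then ρ(G) > ρ(B(k−1, k+1, k−1)). -/

import Mathlib

open SimpleGraph

/-- The spectral radius of a finite simple graph: the largest eigenvalue of its
adjacency matrix, i.e. the supremum of its (real) spectrum. -/
noncomputable def specRad {V : Type*} [Fintype V] (G : SimpleGraph V) : ℝ := by
  classical exact sSup (spectrum ℝ (G.adjMatrix ℝ))

/-- The adjacency matrix of a finite simple graph over ℝ. -/
noncomputable def adjMat {V : Type*} [Fintype V] (G : SimpleGraph V) : Matrix V V ℝ := by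
  classical exact G.adjMatrix ℝ

/-- The independence number of a graph: the maximum size of a set of pairwise
non-adjacent vertices. -/
noncomputable def indNum {V : Type*} [Fintype V] (G : SimpleGraph V) : ℕ :=
  sSup {k | ∃ s : Finset V, (∀ u ∈ s, ∀ v ∈ s, ¬ G.Adj u v) ∧ s.card = k}

/-- `BGraph m p q` is the graph `B(m,p,q)` obtained by attaching a cycle `C_m` and a
cycle `C_q` at the two end vertices of a path with `p` edges.  Its vertices are the
`m` vertices `u_0, …, u_{m-1}` of the `m`-cycle, the `p-1` internal vertices
`w_1, …, w_{p-1}` of the path, and the `q` vertices `v_0, …, v_{q-1}` of the `q`-cycle;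
the path joins `u_0` and `v_0`. -/
def BGraph (m p q : ℕ) : SimpleGraph (Fin m ⊕ Fin (p - 1) ⊕ Fin q) :=
  SimpleGraph.fromRel (fun a b =>
    match a, b with
    | Sum.inl i, Sum.inl j => (i.val + 1) % m = j.val
    | Sum.inr (Sum.inl i), Sum.inr (Sum.inl j) => i.val + 1 = j.val
    | Sum.inl i, Sum.inr (Sum.inl j) => i.val = 0 ∧ j.val = 0
    | Sum.inr (Sum.inl i), Sum.inr (Sum.inr j) => i.val = p - 2 ∧ j.val = 0
    | Sum.inl i, Sum.inr (Sum.inr j) => p = 1 ∧ i.val = 0 ∧ j.val = 0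
    | Sum.inr (Sum.inr i), Sum.inr (Sum.inr j) => (i.val + 1) % q = j.val
    | _, _ => False)

/-- `CGraph m q` is the graph `C(m,q)` obtained by identifying one vertex of a cycle
`C_m` with one vertex of a cycle `C_q`.  Its vertices are the `m` vertices of the
`m`-cycle together with the `q-1` remaining vertices of the `q`-cycle, which is
attached at the vertex `Sum.inl 0`. -/
def CGraph (m q : ℕ) : SimpleGraph (Fin m ⊕ Fin (q - 1)) :=
  SimpleGraph.fromRel (fun a b =>
    match a, b with
    | Sum.inl i, Sum.inl j => (i.val + 1) % m = j.val
    | Sum.inr i, Sum.inr j => i.val + 1 = j.val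
    | Sum.inl i, Sum.inr j => i.val = 0 ∧ (j.val = 0 ∨ j.val = q - 2)
    | _, _ => False)

/-- `PGraph m p q` is the graph `P(m,p,q)` obtained by identifying the two end
vertices of three internally disjoint paths with `m`, `p` and `q` edges respectively.
Its vertices are the two end vertices `u_0 = Sum.inl ()` and `v_0 = Sum.inr (Sum.inl ())`,
together with the internal vertices of the three paths. -/
def PGraph (m p q : ℕ) :
    SimpleGraph (Unit ⊕ Unit ⊕ Fin (m - 1) ⊕ Fin (p - 1) ⊕ Fin (q - 1)) :=
  SimpleGraph.fromRel (fun a b =>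
    match a, b with
    | Sum.inl _, Sum.inr (Sum.inl _) => m = 1 ∨ p = 1 ∨ q = 1
    | Sum.inl _, Sum.inr (Sum.inr (Sum.inl i)) => i.val = 0
    | Sum.inl _, Sum.inr (Sum.inr (Sum.inr (Sum.inl i))) => i.val = 0
    | Sum.inl _, Sum.inr (Sum.inr (Sum.inr (Sum.inr i))) => i.val = 0
    | Sum.inr (Sum.inl _), Sum.inr (Sum.inr (Sum.inl i)) => i.val = m - 2
    | Sum.inr (Sum.inl _), Sum.inr (Sum.inr (Sum.inr (Sum.inl i))) => i.val = p - 2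
    | Sum.inr (Sum.inl _), Sum.inr (Sum.inr (Sum.inr (Sum.inr i))) => i.val = q - 2
    | Sum.inr (Sum.inr (Sum.inl i)), Sum.inr (Sum.inr (Sum.inl j)) => i.val + 1 = j.val
    | Sum.inr (Sum.inr (Sum.inr (Sum.inl i))), Sum.inr (Sum.inr (Sum.inr (Sum.inl j))) =>
        i.val + 1 = j.val
    | Sum.inr (Sum.inr (Sum.inr (Sum.inr i))), Sum.inr (Sum.inr (Sum.inr (Sum.inr j))) =>
        i.val + 1 = j.val
    | _, _ => False)

/-- `H` is contained in `G` as a subgraph, i.e. `G` has a subgraph isomorphic to `H`. -/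
def containsCopy {W V : Type*} (H : SimpleGraph W) (G : SimpleGraph V) : Prop :=
  ∃ f : H →g G, Function.Injective f

open scoped Classical

section Infra

variable {V : Type*} [Fintype V]

lemma specRad_eq (G : SimpleGraph V) : specRad G = sSup (spectrum ℝ (adjMat G)) := rfl

lemma adjMat_apply (G : SimpleGraph V) (i j : V) :
    adjMat G i j = if G.Adj i j then 1 else 0 := by
  unfold adjMat
  rw [SimpleGraph.adjMatrix_apply]

lemma adjMat_nonneg (G : SimpleGraph V) (i j : V) : 0 ≤ adjMat G i j := by
  rw [adjMat_apply]; split <;> norm_num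

lemma adjMat_le_one (G : SimpleGraph V) (i j : V) : adjMat G i j ≤ 1 := by
  rw [adjMat_apply]; split <;> norm_num

lemma adjMat_isHermitian (G : SimpleGraph V) : (adjMat G).IsHermitian := by
  ext i j
  simp only [Matrix.conjTranspose_apply, adjMat_apply, star_trivial]
  rw [SimpleGraph.adj_comm]

lemma exists_eigenvector {M : Matrix V V ℝ} {μ : ℝ}
    (hμ : μ ∈ spectrum ℝ M) : ∃ v : V → ℝ, v ≠ 0 ∧ M.mulVec v = μ • v := by
  classical
  rw [← AlgEquiv.spectrum_eq (Matrix.toLinAlgEquiv' (R := ℝ) (n := V)) M] at hμ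
  rw [← Module.End.hasEigenvalue_iff_mem_spectrum] at hμ
  obtain ⟨v, hv⟩ := hμ.exists_hasEigenvector
  refine ⟨v, hv.2, ?_⟩
  have := hv.apply_eq_smul
  simpa [Matrix.toLinAlgEquiv'_apply, Matrix.toLin'_apply] using this

lemma spectrum_le_of_cert (G : SimpleGraph V) (x : V → ℝ)
    (hx : ∀ v, 0 < x v) (c : ℝ) (hc : 0 ≤ c)
    (h : ∀ v, ∑ u, adjMat G v u * x u ≤ c * x v) :
    ∀ μ ∈ spectrum ℝ (adjMat G), μ ≤ c := by
  classical
  intro μ hμ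
  obtain ⟨v, hv0, hveq⟩ := exists_eigenvector hμ
  rcases le_or_gt μ 0 with hμ0 | hμ0
  · linarith
  obtain ⟨j0, hj0⟩ : ∃ j, v j ≠ 0 := by
    by_contra hcon
    push_neg at hcon
    exact hv0 (funext fun j => hcon j)
  obtain ⟨i, -, hi⟩ := Finset.exists_max_image Finset.univ (fun j => |v j| / x j)
    ⟨j0, Finset.mem_univ j0⟩
  set t := |v i| / x i with ht
  have hvj : ∀ j, |v j| ≤ t * x j := by
    intro j
    have := hi j (Finset.mem_univ j)
    rw [div_le_iff₀ (hx j)] at this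
    simpa [ht, mul_comm] using this
  have htpos : 0 < t := by
    have h1 : (0:ℝ) < |v j0| / x j0 := div_pos (abs_pos.2 hj0) (hx j0)
    exact lt_of_lt_of_le h1 (hi j0 (Finset.mem_univ j0))
  have hvi : |v i| = t * x i := by
    rw [ht, div_mul_cancel₀]
    exact ne_of_gt (hx i)
  have heig : μ * v i = ∑ u, adjMat G i u * v u := by
    have := congrFun hveq i
    simp only [Matrix.mulVec, dotProduct, Pi.smul_apply, smul_eq_mul] at this
    rw [← this]
  have hchain : μ * |v i| ≤ c * |v i| := by
    calc μ * |v i| = |μ * v i| := by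
          rw [abs_mul, abs_of_pos hμ0]
      _ = |∑ u, adjMat G i u * v u| := by rw [heig]
      _ ≤ ∑ u, |adjMat G i u * v u| := Finset.abs_sum_le_sum_abs _ _
      _ = ∑ u, adjMat G i u * |v u| := by
          refine Finset.sum_congr rfl fun u _ => ?_
          rw [abs_mul, abs_of_nonneg (adjMat_nonneg G i u)]
      _ ≤ ∑ u, adjMat G i u * (t * x u) := by
          refine Finset.sum_le_sum fun u _ => ?_
          exact mul_le_mul_of_nonneg_left (hvj u) (adjMat_nonneg G i u)
      _ = t * ∑ u, adjMat G i u * x u := by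
          rw [Finset.mul_sum]; refine Finset.sum_congr rfl fun u _ => by ring
      _ ≤ t * (c * x i) := by
          exact mul_le_mul_of_nonneg_left (h i) (le_of_lt htpos)
      _ = c * |v i| := by rw [hvi]; ring
  have : 0 < |v i| := by rw [hvi]; exact mul_pos htpos (hx i)
  exact le_of_mul_le_mul_right (by linarith [hchain]) this

lemma spectrum_bddAbove (G : SimpleGraph V) : BddAbove (spectrum ℝ (adjMat G)) := by
  refine ⟨(Fintype.card V : ℝ), fun μ hμ => ?_⟩
  refine spectrum_le_of_cert G (fun _ => 1) (fun _ => one_pos) _ (Nat.cast_nonneg _) ?_ μ hμ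
  intro v
  calc ∑ u, adjMat G v u * 1 ≤ ∑ _u : V, (1:ℝ) := by
        refine Finset.sum_le_sum fun u _ => by
          rw [mul_one]; exact adjMat_le_one G v u
    _ = (Fintype.card V : ℝ) := by simp
    _ = (Fintype.card V : ℝ) * 1 := by ring

lemma specRad_le_of_cert (G : SimpleGraph V) (x : V → ℝ)
    (hx : ∀ v, 0 < x v) (c : ℝ) (hc : 0 ≤ c)
    (h : ∀ v, ∑ u, adjMat G v u * x u ≤ c * x v) : specRad G ≤ c := by
  rw [specRad_eq]
  exact Real.sSup_le (spectrum_le_of_cert G x hx c hc h) hc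

end Infra


section Ray
variable {V : Type*} [Fintype V]
lemma quad_form_le_specRad (G : SimpleGraph V) (y : V → ℝ) :
    ∑ i, ∑ j, adjMat G i j * y i * y j ≤ specRad G * ∑ i, (y i)^2 := by
  classical
  have hA := adjMat_isHermitian G
  set A := adjMat G with hAdef
  set b := hA.eigenvectorBasis with hb
  set μ := hA.eigenvalues with hμ
  set y' : EuclideanSpace ℝ V := WithLp.toLp 2 y with hy'
  set c : V → ℝ := fun i => inner ℝ (b i) y' with hc
  have hbound : ∀ i, μ i ≤ specRad G := fun i =>
    le_csSup (spectrum_bddAbove G) (hA.eigenvalues_mem_spectrum_real i)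
  -- expansion of y
  have hsum_apply : ∀ (w : V → ℝ) (j : V),
      (∑ i, w i • b i : EuclideanSpace ℝ V) j = ∑ i, w i * (b i) j := by
    intro w j
    rw [WithLp.ofLp_sum, Finset.sum_apply]; simp
  have hrep : ∀ j, y j = ∑ i, c i * (b i) j := by
    intro j
    have h1 := b.sum_repr' y'
    calc y j = y' j := rfl
      _ = (∑ i, (inner ℝ (b i) y' : ℝ) • b i : EuclideanSpace ℝ V) j := by rw [h1]
      _ = ∑ i, c i * (b i) j := hsum_apply _ j
  -- A acting on eigenbasis
  have hmul : ∀ i, A.mulVec (b i) = μ i • ⇑(b i) := fun i => hA.mulVec_eigenvectorBasis i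
  have hdot : ∀ kk : V, ∑ j, A kk j * y j = ∑ i, c i * μ i * (b i) kk := by
    intro kk
    calc ∑ j, A kk j * y j = ∑ j, A kk j * ∑ i, c i * (b i) j := by
            refine Finset.sum_congr rfl fun j _ => by rw [hrep j]
      _ = ∑ j, ∑ i, A kk j * (c i * (b i) j) := by
            refine Finset.sum_congr rfl fun j _ => ?_; rw [Finset.mul_sum]
      _ = ∑ i, ∑ j, A kk j * (c i * (b i) j) := Finset.sum_comm
      _ = ∑ i, c i * ∑ j, A kk j * (b i) j := by
            refine Finset.sum_congr rfl fun i _ => ?_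
            rw [Finset.mul_sum]; refine Finset.sum_congr rfl fun j _ => by ring
      _ = ∑ i, c i * (μ i * (b i) kk) := by
            refine Finset.sum_congr rfl fun i _ => ?_
            congr 1
            have := congrFun (hmul i) kk
            simp only [Matrix.mulVec, dotProduct, Pi.smul_apply, smul_eq_mul] at this
            exact this
      _ = ∑ i, c i * μ i * (b i) kk := by refine Finset.sum_congr rfl fun i _ => by ring
  have hyb : ∀ i, ∑ kk, y kk * (b i) kk = c i := by
    intro i
    have h3 : (inner ℝ (b i) y' : ℝ) = ∑ kk, (b i) kk * y kk := by
      rw [PiLp.inner_apply]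
      simp [RCLike.inner_apply, conj_trivial, hy', mul_comm]
    rw [hc]
    simp only []
    rw [h3]
    exact Finset.sum_congr rfl fun kk _ => by ring
  have hLHS : ∑ i, ∑ j, A i j * y i * y j = ∑ i, μ i * (c i)^2 := by
    calc ∑ i, ∑ j, A i j * y i * y j
        = ∑ kk, y kk * ∑ j, A kk j * y j := by
          refine Finset.sum_congr rfl fun i _ => ?_
          rw [Finset.mul_sum]; refine Finset.sum_congr rfl fun j _ => by ring
      _ = ∑ kk, y kk * ∑ i, c i * μ i * (b i) kk := by
          refine Finset.sum_congr rfl fun kk _ => by rw [hdot kk]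
      _ = ∑ kk, ∑ i, y kk * (c i * μ i * (b i) kk) := by
          refine Finset.sum_congr rfl fun kk _ => Finset.mul_sum _ _ _
      _ = ∑ i, ∑ kk, y kk * (c i * μ i * (b i) kk) := Finset.sum_comm
      _ = ∑ i, c i * μ i * ∑ kk, y kk * (b i) kk := by
          refine Finset.sum_congr rfl fun i _ => ?_
          rw [Finset.mul_sum]; refine Finset.sum_congr rfl fun kk _ => by ring
      _ = ∑ i, μ i * (c i)^2 := by
          refine Finset.sum_congr rfl fun i _ => ?_
          rw [hyb i]; ring
  have hnorm : ∑ i, (y i)^2 = ∑ i, (c i)^2 := by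
    have h2 := b.sum_inner_mul_inner y' y'
    have hyy : (inner ℝ y' y' : ℝ) = ∑ i, (y i)^2 := by
      rw [PiLp.inner_apply]
      refine Finset.sum_congr rfl fun i _ => ?_
      simp [RCLike.inner_apply, conj_trivial, sq, hy']
    have h4 : ∀ i, (inner ℝ y' (b i) : ℝ) * (inner ℝ (b i) y' : ℝ) = (c i)^2 := by
      intro i
      have e1 : (inner ℝ y' (b i) : ℝ) = c i := real_inner_comm _ _
      rw [e1]
      show c i * c i = c i ^ 2
      ring
    rw [← hyy, ← h2]
    exact Finset.sum_congr rfl fun i _ => h4 i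
  rw [hLHS, hnorm, Finset.mul_sum]
  refine Finset.sum_le_sum fun i _ => ?_
  exact mul_le_mul_of_nonneg_right (hbound i) (sq_nonneg _)

end Ray

section Push

variable {W V : Type*} [Fintype W] [Fintype V]

lemma adjMat_one {V : Type*} [Fintype V] {G : SimpleGraph V} {i j : V} (h : G.Adj i j) :
    adjMat G i j = 1 := by rw [adjMat_apply, if_pos h]

/-- Lower bound on a row sum from a pair of distinct neighbors. -/
lemma row_ge2 {H : SimpleGraph W} (x : W → ℝ) (hx : ∀ u, 0 ≤ x u) (v u1 u2 : W)
    (h12 : u1 ≠ u2) (ha1 : H.Adj v u1) (ha2 : H.Adj v u2) :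
    x u1 + x u2 ≤ ∑ u, adjMat H v u * x u := by
  classical
  have hsub : ({u1, u2} : Finset W) ⊆ Finset.univ := Finset.subset_univ _
  have h1 : ∑ u ∈ ({u1, u2} : Finset W), adjMat H v u * x u = x u1 + x u2 := by
    rw [Finset.sum_pair h12, adjMat_one ha1, adjMat_one ha2, one_mul, one_mul]
  rw [← h1]
  refine Finset.sum_le_sum_of_subset_of_nonneg hsub fun u _ _ =>
    mul_nonneg (adjMat_nonneg H v u) (hx u)

/-- Lower bound on a row sum from four pairwise distinct neighbors. -/
lemma row_ge4 {H : SimpleGraph W} (x : W → ℝ) (hx : ∀ u, 0 ≤ x u) (v u1 u2 u3 u4 : W)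
    (h12 : u1 ≠ u2) (h13 : u1 ≠ u3) (h14 : u1 ≠ u4) (h23 : u2 ≠ u3) (h24 : u2 ≠ u4)
    (h34 : u3 ≠ u4)
    (ha1 : H.Adj v u1) (ha2 : H.Adj v u2) (ha3 : H.Adj v u3) (ha4 : H.Adj v u4) :
    x u1 + x u2 + x u3 + x u4 ≤ ∑ u, adjMat H v u * x u := by
  classical
  have h1 : ∑ u ∈ ({u1, u2, u3, u4} : Finset W), adjMat H v u * x u
      = x u1 + x u2 + x u3 + x u4 := by
    rw [Finset.sum_insert (by simp [h12, h13, h14]),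
      Finset.sum_insert (by simp [h23, h24]),
      Finset.sum_pair h34,
      adjMat_one ha1, adjMat_one ha2, adjMat_one ha3, adjMat_one ha4]
    ring
  rw [← h1]
  refine Finset.sum_le_sum_of_subset_of_nonneg (Finset.subset_univ _) fun u _ _ =>
    mul_nonneg (adjMat_nonneg H v u) (hx u)

/-- Upper bound on a row sum given that all neighbors lie in `{u1, u2}`. -/
lemma row_le2 {H : SimpleGraph W} (x : W → ℝ) (hx : ∀ u, 0 ≤ x u) (v u1 u2 : W)
    (hs : ∀ u, H.Adj v u → u = u1 ∨ u = u2) :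
    ∑ u, adjMat H v u * x u ≤ x u1 + x u2 := by
  classical
  have h1 : ∀ u, adjMat H v u * x u ≤ if u ∈ ({u1, u2} : Finset W) then x u else 0 := by
    intro u
    by_cases h : H.Adj v u
    · rw [adjMat_one h, one_mul, if_pos (by simpa using hs u h)]
    · rw [adjMat_apply, if_neg h, zero_mul]
      split
      · exact hx u
      · exact le_rfl
  calc ∑ u, adjMat H v u * x u ≤ ∑ u, if u ∈ ({u1, u2} : Finset W) then x u else 0 :=
        Finset.sum_le_sum fun u _ => h1 u
    _ = ∑ u ∈ ({u1, u2} : Finset W), x u := by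
        rw [Finset.sum_ite_mem, Finset.univ_inter]
    _ ≤ x u1 + x u2 := by
        by_cases h : u1 = u2
        · subst h
          simp only [Finset.insert_idem, Finset.sum_singleton, Finset.pair_eq_singleton]
          exact le_add_of_nonneg_right (hx u1)
        · rw [Finset.sum_pair h]

/-- Upper bound on a row sum given that all neighbors lie in `{u1, u2, u3}`. -/
lemma row_le3 {H : SimpleGraph W} (x : W → ℝ) (hx : ∀ u, 0 ≤ x u) (v u1 u2 u3 : W)
    (h12 : u1 ≠ u2) (h13 : u1 ≠ u3) (h23 : u2 ≠ u3)
    (hs : ∀ u, H.Adj v u → u = u1 ∨ u = u2 ∨ u = u3) :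
    ∑ u, adjMat H v u * x u ≤ x u1 + x u2 + x u3 := by
  classical
  have h1 : ∀ u, adjMat H v u * x u ≤ if u ∈ ({u1, u2, u3} : Finset W) then x u else 0 := by
    intro u
    by_cases h : H.Adj v u
    · rw [adjMat_one h, one_mul, if_pos (by simpa using hs u h)]
    · rw [adjMat_apply, if_neg h, zero_mul]
      split
      · exact hx u
      · exact le_rfl
  calc ∑ u, adjMat H v u * x u ≤ ∑ u, if u ∈ ({u1, u2, u3} : Finset W) then x u else 0 :=
        Finset.sum_le_sum fun u _ => h1 u
    _ = ∑ u ∈ ({u1, u2, u3} : Finset W), x u := by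
        rw [Finset.sum_ite_mem, Finset.univ_inter]
    _ = x u1 + x u2 + x u3 := by
        rw [Finset.sum_insert (by simp [h12, h13]), Finset.sum_pair h23]
        ring

/-- A Perron-type certificate on a subgraph copy gives a lower bound on the
spectral radius. -/
lemma specRad_ge_of_cert {H : SimpleGraph W} {G : SimpleGraph V}
    (hcopy : containsCopy H G)
    (x : W → ℝ) (hx : ∀ w, 0 ≤ x w) (w0 : W) (hw0 : 0 < x w0) (c : ℝ)
    (hcert : ∀ w, c * x w ≤ ∑ u, adjMat H w u * x u) : c ≤ specRad G := by
  classical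
  obtain ⟨f, hf⟩ := hcopy
  set y : V → ℝ := fun v => if h : ∃ w, f w = v then x h.choose else 0 with hy
  have hyf : ∀ w, y (f w) = x w := by
    intro w
    rw [hy]
    have hex : ∃ w', f w' = f w := ⟨w, rfl⟩
    simp only [dif_pos hex]
    congr 1
    exact hf hex.choose_spec
  have hynn : ∀ v, 0 ≤ y v := by
    intro v; rw [hy]; dsimp only
    split
    · exact hx _
    · exact le_rfl
  set e : W ↪ V := ⟨f, hf⟩ with he
  have hzero : ∀ v : V, v ∉ Finset.univ.map e → y v = 0 := by
    intro v hv
    rw [hy]; dsimp only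
    rw [dif_neg]
    rintro ⟨w, rfl⟩
    exact hv (Finset.mem_map.2 ⟨w, Finset.mem_univ w, rfl⟩)
  have hnorm : ∑ v, (y v)^2 = ∑ w, (x w)^2 := by
    calc ∑ v, (y v)^2 = ∑ v ∈ Finset.univ.map e, (y v)^2 := by
          refine (Finset.sum_subset (Finset.subset_univ _) ?_).symm
          intro v _ hv
          rw [hzero v hv]; ring
      _ = ∑ w, (y (e w))^2 := Finset.sum_map Finset.univ e (fun v => (y v)^2)
      _ = ∑ w, (x w)^2 := Finset.sum_congr rfl fun w _ => by
          rw [he]; simp only [Function.Embedding.coeFn_mk]; rw [hyf w]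
  have hquad : c * ∑ w, (x w)^2 ≤ ∑ i, ∑ j, adjMat G i j * y i * y j := by
    have step1 : c * ∑ w, (x w)^2 ≤ ∑ w, x w * ∑ u, adjMat H w u * x u := by
      rw [Finset.mul_sum]
      refine Finset.sum_le_sum fun w _ => ?_
      calc c * (x w)^2 = (c * x w) * x w := by ring
        _ ≤ (∑ u, adjMat H w u * x u) * x w :=
            mul_le_mul_of_nonneg_right (hcert w) (hx w)
        _ = x w * ∑ u, adjMat H w u * x u := by ring
    have step2 : ∀ w u : W, adjMat H w u ≤ adjMat G (f w) (f u) := by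
      intro w u
      rw [adjMat_apply, adjMat_apply]
      by_cases h : H.Adj w u
      · rw [if_pos h, if_pos (f.map_adj h)]
      · rw [if_neg h]
        split <;> norm_num
    have step3 : ∑ w, x w * ∑ u, adjMat H w u * x u
        ≤ ∑ w, ∑ u, adjMat G (f w) (f u) * y (f w) * y (f u) := by
      refine Finset.sum_le_sum fun w _ => ?_
      rw [Finset.mul_sum]
      refine Finset.sum_le_sum fun u _ => ?_
      rw [hyf w, hyf u]
      calc x w * (adjMat H w u * x u) = adjMat H w u * x w * x u := by ring
        _ ≤ adjMat G (f w) (f u) * x w * x u := by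
            refine mul_le_mul_of_nonneg_right (mul_le_mul_of_nonneg_right (step2 w u) (hx w)) (hx u)
        _ = adjMat G (f w) (f u) * x w * x u := rfl
    have step4 : ∑ w, ∑ u, adjMat G (f w) (f u) * y (f w) * y (f u)
        ≤ ∑ i, ∑ j, adjMat G i j * y i * y j := by
      have inner_eq : ∀ w : W, ∑ u, adjMat G (f w) (f u) * y (f w) * y (f u)
          = ∑ j ∈ Finset.univ.map e, adjMat G (f w) j * y (f w) * y j := by
        intro w
        rw [Finset.sum_map Finset.univ e (fun j => adjMat G (f w) j * y (f w) * y j)]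
        rfl
      have inner_le : ∀ i : V, ∑ j ∈ Finset.univ.map e, adjMat G i j * y i * y j
          ≤ ∑ j, adjMat G i j * y i * y j := by
        intro i
        refine Finset.sum_le_sum_of_subset_of_nonneg (Finset.subset_univ _) fun j _ _ => ?_
        exact mul_nonneg (mul_nonneg (adjMat_nonneg G i j) (hynn i)) (hynn j)
      calc ∑ w, ∑ u, adjMat G (f w) (f u) * y (f w) * y (f u)
          = ∑ w, ∑ j ∈ Finset.univ.map e, adjMat G (f w) j * y (f w) * y j :=
            Finset.sum_congr rfl fun w _ => inner_eq w
        _ = ∑ i ∈ Finset.univ.map e, ∑ j ∈ Finset.univ.map e, adjMat G i j * y i * y j := by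
            rw [Finset.sum_map Finset.univ e (fun i => ∑ j ∈ Finset.univ.map e, adjMat G i j * y i * y j)]
            rfl
        _ ≤ ∑ i ∈ Finset.univ.map e, ∑ j, adjMat G i j * y i * y j :=
            Finset.sum_le_sum fun i _ => inner_le i
        _ ≤ ∑ i, ∑ j, adjMat G i j * y i * y j := by
            refine Finset.sum_le_sum_of_subset_of_nonneg (Finset.subset_univ _) fun i _ _ => ?_
            exact Finset.sum_nonneg fun j _ =>
              mul_nonneg (mul_nonneg (adjMat_nonneg G i j) (hynn i)) (hynn j)
    linarith
  have hfin := quad_form_le_specRad G y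
  rw [hnorm] at hfin
  have hS : 0 < ∑ w, (x w)^2 := by
    have h1 : (x w0)^2 ≤ ∑ w, (x w)^2 :=
      Finset.single_le_sum (fun w _ => sq_nonneg (x w)) (Finset.mem_univ w0)
    nlinarith [hw0]
  have := le_trans hquad hfin
  exact le_of_mul_le_mul_right (by linarith) hS
end Push


noncomputable def gfun : ℕ → ℝ := fun d =>
  if d = 0 then 1 else if d = 1 then 4/7 else if d = 2 then 77/250
    else if d = 3 then 131/1000 else 0

lemma gfun_nonneg (d : ℕ) : 0 ≤ gfun d := by
  unfold gfun; split_ifs <;> norm_num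

lemma gfun_ge4 {d : ℕ} (h : 4 ≤ d) : gfun d = 0 := by
  unfold gfun
  rw [if_neg (by omega), if_neg (by omega), if_neg (by omega), if_neg (by omega)]

lemma gfun_anti {a b : ℕ} (h : a ≤ b) : gfun b ≤ gfun a := by
  by_cases hb : 4 ≤ b
  · rw [gfun_ge4 hb]; exact gfun_nonneg a
  · push_neg at hb
    have ha : a ≤ 3 := by omega
    have hb' : b ≤ 3 := by omega
    interval_cases a <;> interval_cases b <;> norm_num [gfun]

lemma gkey {d d1 d2 : ℕ} (hd : 1 ≤ d)
    (h : (d1 = d - 1 ∧ d2 ≤ d + 1) ∨ (d2 = d - 1 ∧ d1 ≤ d + 1)) :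
    (57/25 : ℝ) * gfun d ≤ gfun d1 + gfun d2 := by
  have base : (57/25 : ℝ) * gfun d ≤ gfun (d - 1) + gfun (d + 1) := by
    have hcase : d = 1 ∨ d = 2 ∨ d = 3 ∨ 4 ≤ d := by omega
    rcases hcase with h1 | h1 | h1 | h1
    · subst h1; norm_num [gfun]
    · subst h1; norm_num [gfun]
    · subst h1; norm_num [gfun]
    · rw [gfun_ge4 h1]
      have := add_nonneg (gfun_nonneg (d-1)) (gfun_nonneg (d+1))
      linarith
  rcases h with ⟨h1, h2⟩ | ⟨h1, h2⟩
  · subst h1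
    have := gfun_anti h2
    linarith
  · subst h1
    have := gfun_anti h2
    linarith

noncomputable def xC (m q : ℕ) : Fin m ⊕ Fin (q - 1) → ℝ :=
  Sum.elim (fun i => gfun (min i.val (m - i.val)))
    (fun j => gfun (min (j.val + 1) (q - 1 - j.val)))

lemma xC_nonneg (m q : ℕ) (u : Fin m ⊕ Fin (q - 1)) : 0 ≤ xC m q u := by
  rcases u with i | j <;> exact gfun_nonneg _

lemma cg_cert (m q : ℕ) (hm : 3 ≤ m) (hq : 3 ≤ q) (w : Fin m ⊕ Fin (q - 1)) :
    (57/25 : ℝ) * xC m q w ≤ ∑ u, adjMat (CGraph m q) w u * xC m q u := by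
  have hq2 : 2 ≤ q - 1 := by omega
  rcases w with ⟨iv, hi⟩ | ⟨jv, hj⟩
  · -- cycle side
    by_cases hi0 : iv = 0
    · subst hi0
      refine le_trans ?_ (row_ge4 (xC m q) (xC_nonneg m q) _
        (Sum.inl ⟨1, by omega⟩) (Sum.inl ⟨m - 1, by omega⟩)
        (Sum.inr ⟨0, by omega⟩) (Sum.inr ⟨q - 2, by omega⟩)
        (by simp [Fin.ext_iff]; try omega) (by simp) (by simp) (by simp) (by simp)
        (by simp [Fin.ext_iff]; try omega)
        ?_ ?_ ?_ ?_)
      · show (57/25 : ℝ) * gfun (min 0 (m - 0)) ≤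
          gfun (min 1 (m - 1)) + gfun (min (m - 1) (m - (m - 1)))
          + gfun (min (0 + 1) (q - 1 - 0)) + gfun (min (q - 2 + 1) (q - 1 - (q - 2)))
        rw [show min 0 (m - 0) = 0 by omega, show min 1 (m - 1) = 1 by omega,
          show min (m - 1) (m - (m - 1)) = 1 by omega,
          show min (0 + 1) (q - 1 - 0) = 1 by omega,
          show min (q - 2 + 1) (q - 1 - (q - 2)) = 1 by omega]
        norm_num [gfun]
      · rw [CGraph, SimpleGraph.fromRel_adj]
        refine ⟨by simp [Fin.ext_iff], Or.inl ?_⟩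
        show (0 + 1) % m = 1
        rw [Nat.mod_eq_of_lt (by omega)]
      · rw [CGraph, SimpleGraph.fromRel_adj]
        refine ⟨by simp [Fin.ext_iff]; try omega, Or.inr ?_⟩
        show (m - 1 + 1) % m = 0
        rw [show m - 1 + 1 = m by omega, Nat.mod_self]
      · rw [CGraph, SimpleGraph.fromRel_adj]
        exact ⟨by simp, Or.inl ⟨rfl, Or.inl rfl⟩⟩
      · rw [CGraph, SimpleGraph.fromRel_adj]
        exact ⟨by simp, Or.inl ⟨rfl, Or.inr rfl⟩⟩
    · -- non-center cycle vertex
      rcases Nat.lt_or_ge (iv + 1) m with hlt | hge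
      · refine le_trans ?_ (row_ge2 (xC m q) (xC_nonneg m q) _
          (Sum.inl ⟨iv - 1, by omega⟩) (Sum.inl ⟨iv + 1, hlt⟩)
          (by simp [Fin.ext_iff]; try omega) ?_ ?_)
        · show (57/25 : ℝ) * gfun (min iv (m - iv)) ≤
            gfun (min (iv - 1) (m - (iv - 1))) + gfun (min (iv + 1) (m - (iv + 1)))
          exact gkey (by omega) (by omega)
        · rw [CGraph, SimpleGraph.fromRel_adj]
          refine ⟨by simp [Fin.ext_iff]; try omega, Or.inr ?_⟩
          show (iv - 1 + 1) % m = iv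
          rw [show iv - 1 + 1 = iv by omega, Nat.mod_eq_of_lt (by omega)]
        · rw [CGraph, SimpleGraph.fromRel_adj]
          refine ⟨by simp [Fin.ext_iff]; try omega, Or.inl ?_⟩
          show (iv + 1) % m = iv + 1
          rw [Nat.mod_eq_of_lt hlt]
      · -- iv = m - 1
        have him : iv + 1 = m := by omega
        refine le_trans ?_ (row_ge2 (xC m q) (xC_nonneg m q) _
          (Sum.inl ⟨iv - 1, by omega⟩) (Sum.inl ⟨0, by omega⟩)
          (by simp [Fin.ext_iff]; try omega) ?_ ?_)
        · show (57/25 : ℝ) * gfun (min iv (m - iv)) ≤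
            gfun (min (iv - 1) (m - (iv - 1))) + gfun (min 0 (m - 0))
          exact gkey (by omega) (by omega)
        · rw [CGraph, SimpleGraph.fromRel_adj]
          refine ⟨by simp [Fin.ext_iff]; try omega, Or.inr ?_⟩
          show (iv - 1 + 1) % m = iv
          rw [show iv - 1 + 1 = iv by omega, Nat.mod_eq_of_lt (by omega)]
        · rw [CGraph, SimpleGraph.fromRel_adj]
          refine ⟨by simp [Fin.ext_iff]; try omega, Or.inl ?_⟩
          show (iv + 1) % m = 0
          rw [him, Nat.mod_self]
  · -- path side
    by_cases hj0 : jv = 0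
    · subst hj0
      refine le_trans ?_ (row_ge2 (xC m q) (xC_nonneg m q) _
        (Sum.inl ⟨0, by omega⟩) (Sum.inr ⟨1, by omega⟩)
        (by simp) ?_ ?_)
      · show (57/25 : ℝ) * gfun (min (0 + 1) (q - 1 - 0)) ≤
          gfun (min 0 (m - 0)) + gfun (min (1 + 1) (q - 1 - 1))
        exact gkey (by omega) (by omega)
      · rw [CGraph, SimpleGraph.fromRel_adj]
        exact ⟨by simp, Or.inr ⟨rfl, Or.inl rfl⟩⟩
      · rw [CGraph, SimpleGraph.fromRel_adj]
        refine ⟨by simp [Fin.ext_iff], Or.inl ?_⟩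
        show 0 + 1 = 1
        rfl
    · by_cases hjq : jv = q - 2
      · subst hjq
        refine le_trans ?_ (row_ge2 (xC m q) (xC_nonneg m q) _
          (Sum.inl ⟨0, by omega⟩) (Sum.inr ⟨q - 3, by omega⟩)
          (by simp) ?_ ?_)
        · show (57/25 : ℝ) * gfun (min (q - 2 + 1) (q - 1 - (q - 2))) ≤
            gfun (min 0 (m - 0)) + gfun (min (q - 3 + 1) (q - 1 - (q - 3)))
          exact gkey (by omega) (by omega)
        · rw [CGraph, SimpleGraph.fromRel_adj]
          exact ⟨by simp, Or.inr ⟨rfl, Or.inr rfl⟩⟩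
        · rw [CGraph, SimpleGraph.fromRel_adj]
          refine ⟨by simp [Fin.ext_iff]; try omega, Or.inr ?_⟩
          show q - 3 + 1 = q - 2
          omega
      · -- interior path vertex
        refine le_trans ?_ (row_ge2 (xC m q) (xC_nonneg m q) _
          (Sum.inr ⟨jv - 1, by omega⟩) (Sum.inr ⟨jv + 1, by omega⟩)
          (by simp [Fin.ext_iff]; try omega) ?_ ?_)
        · show (57/25 : ℝ) * gfun (min (jv + 1) (q - 1 - jv)) ≤
            gfun (min (jv - 1 + 1) (q - 1 - (jv - 1))) + gfun (min (jv + 1 + 1) (q - 1 - (jv + 1)))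
          exact gkey (by omega) (by omega)
        · rw [CGraph, SimpleGraph.fromRel_adj]
          refine ⟨by simp [Fin.ext_iff]; try omega, Or.inr ?_⟩
          show jv - 1 + 1 = jv
          omega
        · rw [CGraph, SimpleGraph.fromRel_adj]
          refine ⟨by simp [Fin.ext_iff]; try omega, Or.inl ?_⟩
          show jv + 1 = jv + 1
          rfl


lemma mod_succ {a b m : ℕ} (ha : a < m) (h : (a + 1) % m = b) :
    (a + 1 = m ∧ b = 0) ∨ (a + 1 < m ∧ b = a + 1) := by
  rcases Nat.lt_or_ge (a + 1) m with h1 | h1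
  · exact Or.inr ⟨h1, by rw [← h, Nat.mod_eq_of_lt h1]⟩
  · have h2 : a + 1 = m := by omega
    exact Or.inl ⟨h2, by rw [← h, h2, Nat.mod_self]⟩

noncomputable def hCf : ℕ → ℝ := fun d =>
  if d = 0 then 127/100 else if d = 1 then 1 else 4/5

noncomputable def hPf : ℕ → ℝ := fun d => if d ≤ 1 then 22/25 else 7/10

lemma hCf_pos (d : ℕ) : 0 < hCf d := by unfold hCf; split_ifs <;> norm_num
lemma hPf_pos (d : ℕ) : 0 < hPf d := by unfold hPf; split_ifs <;> norm_num
lemma hCf_le_one {d : ℕ} (h : 1 ≤ d) : hCf d ≤ 1 := by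
  unfold hCf; rw [if_neg (by omega)]; split_ifs <;> norm_num
lemma hCf_ge2 {d : ℕ} (h : 2 ≤ d) : hCf d = 4/5 := by
  unfold hCf; rw [if_neg (by omega), if_neg (by omega)]
lemma hPf_le {d : ℕ} : hPf d ≤ 22/25 := by unfold hPf; split_ifs <;> norm_num
lemma hPf_ge2 {d : ℕ} (h : 2 ≤ d) : hPf d = 7/10 := by
  unfold hPf; rw [if_neg (by omega)]

lemma hCkey {d d1 d2 : ℕ}
    (h : (d = 1 ∧ ((d1 = 0 ∧ 1 ≤ d2) ∨ (d2 = 0 ∧ 1 ≤ d1))) ∨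
         (2 ≤ d ∧ 1 ≤ d1 ∧ 1 ≤ d2 ∧ (2 ≤ d1 ∨ 2 ≤ d2))) :
    hCf d1 + hCf d2 ≤ (227/100) * hCf d := by
  rcases h with ⟨hd, ⟨h1, h2⟩ | ⟨h1, h2⟩⟩ | ⟨hd, h1, h2, h3 | h3⟩
  · subst hd h1
    have := hCf_le_one h2
    norm_num [hCf] at *
    linarith
  · subst hd h1
    have := hCf_le_one h2
    norm_num [hCf] at *
    linarith
  · rw [hCf_ge2 hd, hCf_ge2 h3]
    have := hCf_le_one h2
    norm_num at *
    linarith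
  · rw [hCf_ge2 hd, hCf_ge2 h3]
    have := hCf_le_one h1
    norm_num at *
    linarith

lemma hPkey {d d1 d2 : ℕ} (hd : 2 ≤ d) (h : 2 ≤ d1 ∨ 2 ≤ d2) :
    hPf d1 + hPf d2 ≤ (227/100) * hPf d := by
  rw [hPf_ge2 hd]
  rcases h with h | h
  · rw [hPf_ge2 h]
    have := hPf_le (d := d2)
    norm_num at *
    linarith
  · rw [hPf_ge2 h]
    have := hPf_le (d := d1)
    norm_num at *
    linarith

noncomputable def xB (k : ℕ) : Fin (k - 1) ⊕ Fin (k + 1 - 1) ⊕ Fin (k - 1) → ℝ :=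
  Sum.elim (fun i => hCf (min i.val (k - 1 - i.val)))
    (Sum.elim (fun j => hPf (min (j.val + 1) (k - j.val)))
      (fun i => hCf (min i.val (k - 1 - i.val))))

lemma xB_pos (k : ℕ) (u : Fin (k - 1) ⊕ Fin (k + 1 - 1) ⊕ Fin (k - 1)) : 0 < xB k u := by
  rcases u with i | j | i
  · exact hCf_pos _
  · exact hPf_pos _
  · exact hCf_pos _

lemma xB_nonneg (k : ℕ) (u) : 0 ≤ xB k u := le_of_lt (xB_pos k u)

set_option maxHeartbeats 2000000 in
lemma bg_cert (k : ℕ) (hk : 4 ≤ k) (hke : k % 2 = 0)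
    (v : Fin (k - 1) ⊕ Fin (k + 1 - 1) ⊕ Fin (k - 1)) :
    ∑ u, adjMat (BGraph (k - 1) (k + 1) (k - 1)) v u * xB k u ≤ (227/100) * xB k v := by
  have hm3 : 3 ≤ k - 1 := by omega
  rcases v with ⟨iv, hi⟩ | ⟨jv, hj⟩ | ⟨iv, hi⟩
  · by_cases hi0 : iv = 0
    · subst hi0
      refine le_trans (row_le3 (xB k) (xB_nonneg k) _
        (Sum.inl ⟨1, by omega⟩) (Sum.inl ⟨k - 1 - 1, by omega⟩)
        (Sum.inr (Sum.inl ⟨0, by omega⟩))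
        (by simp [Fin.ext_iff]; omega) (by simp) (by simp) ?_) ?_
      · rintro (⟨uv, hu⟩ | ⟨uj, huj⟩ | ⟨uw, huw⟩) hadj <;>
          rw [BGraph, SimpleGraph.fromRel_adj] at hadj
        · obtain ⟨hne, h | h⟩ := hadj
          · have h' : (0 + 1) % (k - 1) = uv := h
            left
            have : uv = 1 := by rw [← h', Nat.mod_eq_of_lt (by omega)]
            simp [Fin.ext_iff, this]
          · have h' : (uv + 1) % (k - 1) = 0 := h
            rcases mod_succ hu h' with ⟨h1, _⟩ | ⟨_, h2⟩
            · right; left; simp [Fin.ext_iff]; omega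
            · omega
        · obtain ⟨hne, h | h⟩ := hadj
          · have h' : (0:ℕ) = 0 ∧ uj = 0 := h
            right; right; simp [Fin.ext_iff]; exact h'.2
          · exact absurd h (by exact fun hh => hh.elim)
        · obtain ⟨hne, h | h⟩ := hadj
          · have h' : k + 1 = 1 ∧ (0:ℕ) = 0 ∧ uw = 0 := h
            omega
          · exact absurd h (by exact fun hh => hh.elim)
      · show hCf (min 1 (k - 1 - 1)) + hCf (min (k - 1 - 1) (k - 1 - (k - 1 - 1)))
            + hPf (min (0 + 1) (k - 0)) ≤ (227/100) * hCf (min 0 (k - 1 - 0))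
        rw [show min 1 (k - 1 - 1) = 1 by omega,
          show min (k - 1 - 1) (k - 1 - (k - 1 - 1)) = 1 by omega,
          show min (0 + 1) (k - 0) = 1 by omega,
          show min 0 (k - 1 - 0) = 0 by omega]
        norm_num [hCf, hPf]
    · -- non-junction cycle vertex (first cycle)
      rcases Nat.lt_or_ge (iv + 1) (k - 1) with hlt | hge
      · refine le_trans (row_le2 (xB k) (xB_nonneg k) _
          (Sum.inl ⟨iv - 1, by omega⟩) (Sum.inl ⟨iv + 1, hlt⟩) ?_) ?_
        · rintro (⟨uv, hu⟩ | ⟨uj, huj⟩ | ⟨uw, huw⟩) hadj <;>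
            rw [BGraph, SimpleGraph.fromRel_adj] at hadj
          · obtain ⟨hne, h | h⟩ := hadj
            · have h' : (iv + 1) % (k - 1) = uv := h
              rcases mod_succ hi h' with ⟨h1, h2⟩ | ⟨h1, h2⟩
              · omega
              · right; simp [Fin.ext_iff]; omega
            · have h' : (uv + 1) % (k - 1) = iv := h
              rcases mod_succ hu h' with ⟨h1, h2⟩ | ⟨h1, h2⟩
              · omega
              · left; simp [Fin.ext_iff]; omega
          · obtain ⟨hne, h | h⟩ := hadj
            · have h' : iv = 0 ∧ uj = 0 := h
              omega
            · exact h.elim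
          · obtain ⟨hne, h | h⟩ := hadj
            · have h' : k + 1 = 1 ∧ iv = 0 ∧ uw = 0 := h
              omega
            · exact h.elim
        · show hCf (min (iv - 1) (k - 1 - (iv - 1))) + hCf (min (iv + 1) (k - 1 - (iv + 1)))
              ≤ (227/100) * hCf (min iv (k - 1 - iv))
          exact hCkey (by omega)
      · have him : iv + 1 = k - 1 := by omega
        refine le_trans (row_le2 (xB k) (xB_nonneg k) _
          (Sum.inl ⟨iv - 1, by omega⟩) (Sum.inl ⟨0, by omega⟩) ?_) ?_
        · rintro (⟨uv, hu⟩ | ⟨uj, huj⟩ | ⟨uw, huw⟩) hadj <;>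
            rw [BGraph, SimpleGraph.fromRel_adj] at hadj
          · obtain ⟨hne, h | h⟩ := hadj
            · have h' : (iv + 1) % (k - 1) = uv := h
              rcases mod_succ hi h' with ⟨h1, h2⟩ | ⟨h1, h2⟩
              · right; simp [Fin.ext_iff]; omega
              · omega
            · have h' : (uv + 1) % (k - 1) = iv := h
              rcases mod_succ hu h' with ⟨h1, h2⟩ | ⟨h1, h2⟩
              · omega
              · left; simp [Fin.ext_iff]; omega
          · obtain ⟨hne, h | h⟩ := hadj
            · have h' : iv = 0 ∧ uj = 0 := h
              omega
            · exact h.elim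
          · obtain ⟨hne, h | h⟩ := hadj
            · have h' : k + 1 = 1 ∧ iv = 0 ∧ uw = 0 := h
              omega
            · exact h.elim
        · show hCf (min (iv - 1) (k - 1 - (iv - 1))) + hCf (min 0 (k - 1 - 0))
              ≤ (227/100) * hCf (min iv (k - 1 - iv))
          exact hCkey (by omega)
  · -- path vertex
    by_cases hj0 : jv = 0
    · subst hj0
      refine le_trans (row_le2 (xB k) (xB_nonneg k) _
        (Sum.inl ⟨0, by omega⟩) (Sum.inr (Sum.inl ⟨1, by omega⟩)) ?_) ?_
      · rintro (⟨uv, hu⟩ | ⟨uj, huj⟩ | ⟨uw, huw⟩) hadj <;>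
          rw [BGraph, SimpleGraph.fromRel_adj] at hadj
        · obtain ⟨hne, h | h⟩ := hadj
          · exact h.elim
          · have h' : uv = 0 ∧ (0:ℕ) = 0 := h
            left; simp [Fin.ext_iff]; omega
        · obtain ⟨hne, h | h⟩ := hadj
          · have h' : (0:ℕ) + 1 = uj := h
            right; simp [Fin.ext_iff]; omega
          · have h' : uj + 1 = 0 := h
            omega
        · obtain ⟨hne, h | h⟩ := hadj
          · have h' : (0:ℕ) = k + 1 - 2 ∧ uw = 0 := h
            omega
          · exact h.elim
      · show hCf (min 0 (k - 1 - 0)) + hPf (min (1 + 1) (k - 1))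
            ≤ (227/100) * hPf (min (0 + 1) (k - 0))
        rw [show min 0 (k - 1 - 0) = 0 by omega, show min (1 + 1) (k - 1) = 2 by omega,
          show min (0 + 1) (k - 0) = 1 by omega]
        norm_num [hCf, hPf]
    · by_cases hjk : jv = k - 1
      · subst hjk
        refine le_trans (row_le2 (xB k) (xB_nonneg k) _
          (Sum.inr (Sum.inl ⟨k - 2, by omega⟩)) (Sum.inr (Sum.inr ⟨0, by omega⟩)) ?_) ?_
        · rintro (⟨uv, hu⟩ | ⟨uj, huj⟩ | ⟨uw, huw⟩) hadj <;>
            rw [BGraph, SimpleGraph.fromRel_adj] at hadj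
          · obtain ⟨hne, h | h⟩ := hadj
            · exact h.elim
            · have h' : uv = 0 ∧ k - 1 = 0 := h
              omega
          · obtain ⟨hne, h | h⟩ := hadj
            · have h' : k - 1 + 1 = uj := h
              omega
            · have h' : uj + 1 = k - 1 := h
              left; simp [Fin.ext_iff]; omega
          · obtain ⟨hne, h | h⟩ := hadj
            · have h' : k - 1 = k + 1 - 2 ∧ uw = 0 := h
              right; simp [Fin.ext_iff]; omega
            · exact h.elim
        · show hPf (min (k - 2 + 1) (k - (k - 2))) + hCf (min 0 (k - 1 - 0))
              ≤ (227/100) * hPf (min (k - 1 + 1) (k - (k - 1)))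
          rw [show min (k - 2 + 1) (k - (k - 2)) = 2 by omega,
            show min 0 (k - 1 - 0) = 0 by omega,
            show min (k - 1 + 1) (k - (k - 1)) = 1 by omega]
          norm_num [hCf, hPf]
      · -- interior path vertex
        refine le_trans (row_le2 (xB k) (xB_nonneg k) _
          (Sum.inr (Sum.inl ⟨jv - 1, by omega⟩)) (Sum.inr (Sum.inl ⟨jv + 1, by omega⟩)) ?_) ?_
        · rintro (⟨uv, hu⟩ | ⟨uj, huj⟩ | ⟨uw, huw⟩) hadj <;>
            rw [BGraph, SimpleGraph.fromRel_adj] at hadj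
          · obtain ⟨hne, h | h⟩ := hadj
            · exact h.elim
            · have h' : uv = 0 ∧ jv = 0 := h
              omega
          · obtain ⟨hne, h | h⟩ := hadj
            · have h' : jv + 1 = uj := h
              right; simp [Fin.ext_iff]; omega
            · have h' : uj + 1 = jv := h
              left; simp [Fin.ext_iff]; omega
          · obtain ⟨hne, h | h⟩ := hadj
            · have h' : jv = k + 1 - 2 ∧ uw = 0 := h
              omega
            · exact h.elim
        · show hPf (min (jv - 1 + 1) (k - (jv - 1))) + hPf (min (jv + 1 + 1) (k - (jv + 1)))
              ≤ (227/100) * hPf (min (jv + 1) (k - jv))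
          exact hPkey (by omega) (by omega)
  · -- second cycle
    by_cases hi0 : iv = 0
    · subst hi0
      refine le_trans (row_le3 (xB k) (xB_nonneg k) _
        (Sum.inr (Sum.inr ⟨1, by omega⟩)) (Sum.inr (Sum.inr ⟨k - 1 - 1, by omega⟩))
        (Sum.inr (Sum.inl ⟨k - 1, by omega⟩))
        (by simp [Fin.ext_iff]; omega) (by simp) (by simp) ?_) ?_
      · rintro (⟨uv, hu⟩ | ⟨uj, huj⟩ | ⟨uw, huw⟩) hadj <;>
          rw [BGraph, SimpleGraph.fromRel_adj] at hadj
        · obtain ⟨hne, h | h⟩ := hadj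
          · exact h.elim
          · have h' : k + 1 = 1 ∧ uv = 0 ∧ (0:ℕ) = 0 := h
            omega
        · obtain ⟨hne, h | h⟩ := hadj
          · exact h.elim
          · have h' : uj = k + 1 - 2 ∧ (0:ℕ) = 0 := h
            right; right; simp [Fin.ext_iff]; omega
        · obtain ⟨hne, h | h⟩ := hadj
          · have h' : (0 + 1) % (k - 1) = uw := h
            left
            have : uw = 1 := by rw [← h', Nat.mod_eq_of_lt (by omega)]
            simp [Fin.ext_iff, this]
          · have h' : (uw + 1) % (k - 1) = 0 := h
            rcases mod_succ huw h' with ⟨h1, h2⟩ | ⟨h1, h2⟩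
            · right; left; simp [Fin.ext_iff]; omega
            · omega
      · show hCf (min 1 (k - 1 - 1)) + hCf (min (k - 1 - 1) (k - 1 - (k - 1 - 1)))
            + hPf (min (k - 1 + 1) (k - (k - 1))) ≤ (227/100) * hCf (min 0 (k - 1 - 0))
        rw [show min 1 (k - 1 - 1) = 1 by omega,
          show min (k - 1 - 1) (k - 1 - (k - 1 - 1)) = 1 by omega,
          show min (k - 1 + 1) (k - (k - 1)) = 1 by omega,
          show min 0 (k - 1 - 0) = 0 by omega]
        norm_num [hCf, hPf]
    · rcases Nat.lt_or_ge (iv + 1) (k - 1) with hlt | hge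
      · refine le_trans (row_le2 (xB k) (xB_nonneg k) _
          (Sum.inr (Sum.inr ⟨iv - 1, by omega⟩)) (Sum.inr (Sum.inr ⟨iv + 1, hlt⟩)) ?_) ?_
        · rintro (⟨uv, hu⟩ | ⟨uj, huj⟩ | ⟨uw, huw⟩) hadj <;>
            rw [BGraph, SimpleGraph.fromRel_adj] at hadj
          · obtain ⟨hne, h | h⟩ := hadj
            · exact h.elim
            · have h' : k + 1 = 1 ∧ uv = 0 ∧ iv = 0 := h
              omega
          · obtain ⟨hne, h | h⟩ := hadj
            · exact h.elim
            · have h' : uj = k + 1 - 2 ∧ iv = 0 := h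
              omega
          · obtain ⟨hne, h | h⟩ := hadj
            · have h' : (iv + 1) % (k - 1) = uw := h
              rcases mod_succ hi h' with ⟨h1, h2⟩ | ⟨h1, h2⟩
              · omega
              · right; simp [Fin.ext_iff]; omega
            · have h' : (uw + 1) % (k - 1) = iv := h
              rcases mod_succ huw h' with ⟨h1, h2⟩ | ⟨h1, h2⟩
              · omega
              · left; simp [Fin.ext_iff]; omega
        · show hCf (min (iv - 1) (k - 1 - (iv - 1))) + hCf (min (iv + 1) (k - 1 - (iv + 1)))
              ≤ (227/100) * hCf (min iv (k - 1 - iv))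
          exact hCkey (by omega)
      · have him : iv + 1 = k - 1 := by omega
        refine le_trans (row_le2 (xB k) (xB_nonneg k) _
          (Sum.inr (Sum.inr ⟨iv - 1, by omega⟩)) (Sum.inr (Sum.inr ⟨0, by omega⟩)) ?_) ?_
        · rintro (⟨uv, hu⟩ | ⟨uj, huj⟩ | ⟨uw, huw⟩) hadj <;>
            rw [BGraph, SimpleGraph.fromRel_adj] at hadj
          · obtain ⟨hne, h | h⟩ := hadj
            · exact h.elim
            · have h' : k + 1 = 1 ∧ uv = 0 ∧ iv = 0 := h
              omega
          · obtain ⟨hne, h | h⟩ := hadj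
            · exact h.elim
            · have h' : uj = k + 1 - 2 ∧ iv = 0 := h
              omega
          · obtain ⟨hne, h | h⟩ := hadj
            · have h' : (iv + 1) % (k - 1) = uw := h
              rcases mod_succ hi h' with ⟨h1, h2⟩ | ⟨h1, h2⟩
              · right; simp [Fin.ext_iff]; omega
              · omega
            · have h' : (uw + 1) % (k - 1) = iv := h
              rcases mod_succ huw h' with ⟨h1, h2⟩ | ⟨h1, h2⟩
              · omega
              · left; simp [Fin.ext_iff]; omega
        · show hCf (min (iv - 1) (k - 1 - (iv - 1))) + hCf (min 0 (k - 1 - 0))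
              ≤ (227/100) * hCf (min iv (k - 1 - iv))
          exact hCkey (by omega)


/-- Let `n ≥ 7` with `n ≡ 4 (mod 6)` and `k = ⌈n/3⌉`.  If a connected
simple graph `G` of order `n` contains a subgraph isomorphic to `C(m,q)` for some
`m, q ≥ 3`, then `ρ(G) > ρ(B(k-1, k+1, k-1))`. -/
theorem CGraph_sub_mod_six_four (n : ℕ) (hn : 7 ≤ n) (hmod : n % 6 = 4)
    (k : ℕ) (hk : k = (n + 2) / 3)
    (V : Type) [Fintype V] (G : SimpleGraph V) (hcard : Fintype.card V = n)
    (hconn : G.Connected)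
    (hsub : ∃ m q : ℕ, 3 ≤ m ∧ 3 ≤ q ∧ containsCopy (CGraph m q) G) :
    specRad (BGraph (k - 1) (k + 1) (k - 1)) < specRad G := by
  obtain ⟨m, q, hm, hq, hcopy⟩ := hsub
  have hk4 : 4 ≤ k := by omega
  have hke : k % 2 = 0 := by omega
  have hup : specRad (BGraph (k - 1) (k + 1) (k - 1)) ≤ 227/100 :=
    specRad_le_of_cert _ (xB k) (xB_pos k) _ (by norm_num) (bg_cert k hk4 hke)
  have hlow : (57/25 : ℝ) ≤ specRad G :=
    specRad_ge_of_cert hcopy (xC m q) (xC_nonneg m q) (Sum.inl ⟨0, by omega⟩)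
      (by show (0:ℝ) < gfun (min 0 (m - 0))
          rw [show min 0 (m - 0) = 0 by omega]
          norm_num [gfun])
      _ (cg_cert m q hm hq)
  calc specRad (BGraph (k - 1) (k + 1) (k - 1)) ≤ 227/100 := hup
    _ < 57/25 := by norm_num
    _ ≤ specRad G := hlow
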